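/- Let H₁,…,H_K be i.i.d. random N_R × N_T complex matrices with i.i.d. CN(0,1) entries, and let η = η(K) satisfy K = Θ(η^α) for some α ≥ 0. Then Pr{ max_{1≤k≤K} log₂(1 + η·Tr(H_k^H H_k)) ≤ log₂η + log₂log η + log₂(α+1) } → 1 as η → ∞. -/

import Mathlib

open Finset Filter Real MeasureTheory ProbabilityTheory Matrix

lemma aux_iIndepFun_ae_eq {ι Ω : Type*} [MeasurableSpace Ω] {μ : Measure Ω}
    {β : ι → Type*} [m : ∀ i, MeasurableSpace (β i)] {f f' : ∀ i, Ω → β i}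
    (hf : iIndepFun f μ) (h : ∀ i, f i =ᵐ[μ] f' i) : iIndepFun f' μ := by
  rw [iIndepFun_iff_measure_inter_preimage_eq_mul] at hf ⊢
  intro S sets hsets
  have h1 : ∀ i ∈ S, (f' i ⁻¹' sets i) =ᵐ[μ] (f i ⁻¹' sets i) := by
    intro i _
    rw [eventuallyEq_set]
    filter_upwards [h i] with ω hω
    simp [Set.mem_preimage, hω]
  have hall : ∀ᵐ ω ∂μ, ∀ i ∈ (S : Set ι), f' i ω = f i ω :=
    (ae_ball_iff S.countable_toSet).2 fun i _ => (h i).symm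
  have h2 : (⋂ i ∈ S, f' i ⁻¹' sets i) =ᵐ[μ] (⋂ i ∈ S, f i ⁻¹' sets i) := by
    rw [eventuallyEq_set]
    filter_upwards [hall] with ω hω
    simp only [Set.mem_iInter, Set.mem_preimage]
    constructor
    · intro hm i hi; rw [← hω i hi]; exact hm i hi
    · intro hm i hi; rw [hω i hi]; exact hm i hi
  rw [measure_congr h2, hf S hsets]
  exact Finset.prod_congr rfl fun i hi => (measure_congr (h1 i hi)).symm

lemma aux_gauss_pdf_smul (s : ℝ) (x : ℝ) :
    ((gaussianPDFReal 0 (1/2) x).toNNReal : ℝ) • Real.exp (s * x ^ 2)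
      = (Real.sqrt π)⁻¹ * Real.exp (-(1 - s) * x ^ 2) := by
  rw [smul_eq_mul]
  rw [Real.coe_toNNReal _ (gaussianPDFReal_nonneg 0 (1/2) x)]
  rw [gaussianPDFReal]
  push_cast
  rw [show (2 : ℝ) * π * (1/2) = π by ring]
  rw [show -(x - 0) ^ 2 / (2 * (1/2 : ℝ)) = -x^2 by ring]
  rw [mul_assoc, ← Real.exp_add]
  ring_nf

lemma aux_gauss_density : gaussianReal 0 (1/2) =
    MeasureTheory.volume.withDensity
      (fun x => ((gaussianPDFReal 0 (1/2) x).toNNReal : ENNReal)) := by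
  rw [gaussianReal_of_var_ne_zero 0 (by norm_num)]
  rfl

lemma aux_gauss_fun_eq (s : ℝ) :
    (fun x => (gaussianPDFReal 0 (1/2) x).toNNReal • Real.exp (s * x ^ 2))
      = fun x => (Real.sqrt π)⁻¹ * Real.exp (-(1 - s) * x ^ 2) :=
  funext fun x => by rw [NNReal.smul_def]; exact aux_gauss_pdf_smul s x

lemma aux_gauss_integrable {s : ℝ} (hs : s < 1) :
    Integrable (fun x => Real.exp (s * x ^ 2)) (gaussianReal 0 (1/2)) := by
  rw [aux_gauss_density, integrable_withDensity_iff_integrable_smul₀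
    ((measurable_gaussianPDFReal 0 (1/2)).real_toNNReal).aemeasurable]
  rw [aux_gauss_fun_eq s]
  exact (integrable_exp_neg_mul_sq (by linarith)).const_mul _

lemma aux_gauss_integral {s : ℝ} (hs : s < 1) :
    ∫ x, Real.exp (s * x ^ 2) ∂(gaussianReal 0 (1/2))
      = (Real.sqrt π)⁻¹ * Real.sqrt (π / (1 - s)) := by
  rw [aux_gauss_density, integral_withDensity_eq_integral_smul
    (measurable_gaussianPDFReal 0 (1/2)).real_toNNReal]
  rw [aux_gauss_fun_eq s, MeasureTheory.integral_const_mul, integral_gaussian]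

open Finset Filter Real MeasureTheory ProbabilityTheory Matrix

set_option maxHeartbeats 2000000

/-- Equation (74) in Appendix F of the paper: for K = Θ(η^α) i.i.d. complex
Gaussian channel matrices, the maximum of log₂(1 + η·Tr(Hₖᴴ Hₖ)) is at most
log₂η + log₂log η + log₂(α+1) with probability tending to one as η → ∞. -/
theorem stmt_19 (NT NR : ℕ) (hNT : 1 ≤ NT) (hNR : 1 ≤ NR)
    (α : ℝ) (hα : 0 ≤ α)
    {Ω : Type*} [MeasureSpace Ω] [IsProbabilityMeasure (ℙ : Measure Ω)]
    (H : ℕ → Ω → Matrix (Fin NR) (Fin NT) ℂ)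
    -- the real coordinates of all the entries of all the matrices:
    (g : (ℕ × (Fin NR × Fin NT) × Bool) → Ω → ℝ)
    (hg : ∀ ω k (q : Fin NR × Fin NT),
      g (k, q, true) ω = (H k ω q.1 q.2).re ∧
      g (k, q, false) ω = (H k ω q.1 q.2).im)
    -- jointly independent, each real coordinate distributed as N(0, 1/2):
    (hindep : iIndepFun g ℙ)
    (hgauss : ∀ i, Measure.map (g i) ℙ = gaussianReal 0 (1/2))
    -- number of users K(η) = Θ(η^α):
    (K : ℝ → ℕ) (a₁ a₂ η₁ : ℝ) (ha₁ : 0 < a₁)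
    (hK : ∀ η ≥ η₁, a₁ * η ^ α ≤ (K η : ℝ) ∧ (K η : ℝ) ≤ a₂ * η ^ α) :
    Tendsto (fun η : ℝ =>
      (ℙ {ω | ∀ k < K η,
        Real.logb 2 (1 + η * (Matrix.trace ((H k ω)ᴴ * H k ω)).re) ≤
          Real.logb 2 η + Real.logb 2 (Real.log η) + Real.logb 2 (α + 1)}).toReal)
      atTop (nhds 1) := by
  classical
  have hα1 : (0:ℝ) < α + 1 := by linarith
  set s : ℝ := 1 - 1/(2*(α+1)) with hs_def
  have hs0 : 0 ≤ s := by
    have h2 : (2:ℝ) ≤ 2*(α+1) := by linarith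
    have := one_div_le_one_div_of_le (by norm_num : (0:ℝ) < 2) h2
    rw [hs_def]; linarith
  have hs1 : s < 1 := by
    have : 0 < 1/(2*(α+1)) := by positivity
    rw [hs_def]; linarith
  have hc : 0 < 1 - s := by linarith
  set M : ℝ := (Real.sqrt π)⁻¹ * Real.sqrt (π/(1-s)) with hM_def
  have hM0 : 0 ≤ M := by positivity
  set cι : ℕ := Fintype.card ((Fin NR × Fin NT) × Bool) with hcι_def
  -- measurable versions of g
  have hae : ∀ i, AEMeasurable (g i) ℙ := by
    intro i; by_contra hnot
    have h1 := hgauss i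
    rw [Measure.map_of_not_aemeasurable hnot] at h1
    have h2 : (gaussianReal 0 (1/2)) Set.univ = 1 := measure_univ
    rw [← h1] at h2; simp at h2
  set g' : (ℕ × ((Fin NR × Fin NT) × Bool)) → Ω → ℝ := fun i => (hae i).mk (g i) with hg'def
  have hg'meas : ∀ i, Measurable (g' i) := fun i => (hae i).measurable_mk
  have hgg' : ∀ i, g i =ᵐ[ℙ] g' i := fun i => (hae i).ae_eq_mk
  have hindep' : iIndepFun g' ℙ := aux_iIndepFun_ae_eq hindep hgg'
  have hmap' : ∀ i, Measure.map (g' i) ℙ = gaussianReal 0 (1/2) :=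
    fun i => (Measure.map_congr (hgg' i)).symm.trans (hgauss i)
  -- squares
  set X : (ℕ × ((Fin NR × Fin NT) × Bool)) → Ω → ℝ := fun i => (fun x : ℝ => x ^ 2) ∘ g' i
    with hXdef
  have hXmeas : ∀ i, Measurable (X i) := fun i => (measurable_id.pow_const 2).comp (hg'meas i)
  have hXindep : iIndepFun X ℙ :=
    hindep'.comp _ (fun _ => measurable_id.pow_const 2)
  have hcont : Continuous fun x : ℝ => Real.exp (s * x ^ 2) := by continuity
  have hint_i : ∀ i, Integrable (fun ω => Real.exp (s * X i ω)) ℙ := by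
    intro i
    have h1 : Integrable (fun x => Real.exp (s * x ^ 2)) (Measure.map (g' i) ℙ) := by
      rw [hmap' i]; exact aux_gauss_integrable hs1
    exact (integrable_map_measure hcont.aestronglyMeasurable (hg'meas i).aemeasurable).mp h1
  have hmgf_i : ∀ i, mgf (X i) ℙ s = M := by
    intro i
    show (∫ ω, Real.exp (s * X i ω) ∂ℙ) = M
    have h1 : ∫ x, Real.exp (s * x^2) ∂(Measure.map (g' i) ℙ)
        = ∫ ω, Real.exp (s * X i ω) ∂ℙ :=
      integral_map (hg'meas i).aemeasurable hcont.aestronglyMeasurable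
    rw [← h1, hmap' i, aux_gauss_integral hs1]
  -- per-user sums
  set e : ℕ → (((Fin NR × Fin NT) × Bool) ↪ ℕ × ((Fin NR × Fin NT) × Bool)) :=
    fun k => ⟨fun i => (k, i), fun a b hab => by simpa using hab⟩ with he_def
  set T : ℕ → Ω → ℝ := fun k => ∑ i ∈ Finset.univ.map (e k), X i with hTdef
  have hTmgf : ∀ k, mgf (T k) ℙ s = M ^ cι := by
    intro k
    rw [hTdef]
    rw [hXindep.mgf_sum hXmeas]
    calc ∏ i ∈ Finset.univ.map (e k), mgf (X i) ℙ s
        = ∏ i ∈ Finset.univ.map (e k), M := Finset.prod_congr rfl fun i _ => hmgf_i i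
      _ = M ^ cι := by
          rw [Finset.prod_const, Finset.card_map, Finset.card_univ]
  have hTint : ∀ k, Integrable (fun ω => Real.exp (s * T k ω)) ℙ :=
    fun k => hXindep.integrable_exp_mul_sum hXmeas (fun i _ => hint_i i)
  have hChern : ∀ k (ε : ℝ), (ℙ {ω | ε ≤ T k ω}).toReal ≤ Real.exp (-s * ε) * M ^ cι := by
    intro k ε
    have := measure_ge_le_exp_mul_mgf (X := T k) (μ := ℙ) ε hs0 (hTint k)
    rwa [hTmgf k] at this
  -- trace identity
  have hre : ∀ z : ℂ, (star z * z).re = z.re^2 + z.im^2 := fun z => by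
    simp [Complex.mul_re]; ring
  have htr : ∀ k ω, (Matrix.trace ((H k ω)ᴴ * H k ω)).re
      = ∑ i : (Fin NR × Fin NT) × Bool, (g (k, i) ω)^2 := by
    intro k ω
    have hR : ∑ i : (Fin NR × Fin NT) × Bool, (g (k, i) ω)^2
        = ∑ q : Fin NR × Fin NT, ((H k ω q.1 q.2).re^2 + (H k ω q.1 q.2).im^2) := by
      rw [Fintype.sum_prod_type]
      refine Finset.sum_congr rfl fun q _ => ?_
      rw [Fintype.sum_bool, (hg ω k q).1, (hg ω k q).2]
    rw [hR]
    calc (Matrix.trace ((H k ω)ᴴ * H k ω)).re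
        = ∑ j : Fin NT, ∑ i : Fin NR, ((H k ω i j).re^2 + (H k ω i j).im^2) := by
          rw [Matrix.trace, Complex.re_sum]
          refine Finset.sum_congr rfl fun j _ => ?_
          rw [Matrix.diag_apply, Matrix.mul_apply, Complex.re_sum]
          refine Finset.sum_congr rfl fun i _ => ?_
          rw [Matrix.conjTranspose_apply]
          exact hre _
      _ = ∑ q : Fin NR × Fin NT, ((H k ω q.1 q.2).re^2 + (H k ω q.1 q.2).im^2) := by
          rw [Finset.sum_comm]
          exact (Fintype.sum_prod_type
            (f := fun q : Fin NR × Fin NT =>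
              ((H k ω q.1 q.2).re^2 + (H k ω q.1 q.2).im^2))).symm
  -- tail threshold and bound
  set tt : ℝ → ℝ := fun η => (α+1) * Real.log η - 1/η with htt_def
  set B : ℝ → ℝ := fun η => Real.exp (-s * tt η) * M ^ cι with hB_def
  have hB0 : ∀ η, 0 ≤ B η := fun η => by rw [hB_def]; positivity
  set Ev : ℝ → Set Ω := fun η => {ω | ∀ k < K η,
      Real.logb 2 (1 + η * (Matrix.trace ((H k ω)ᴴ * H k ω)).re) ≤
        Real.logb 2 η + Real.logb 2 (Real.log η) + Real.logb 2 (α + 1)} with hEv_def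
  -- union bound
  have hmain : ∀ η : ℝ, 2 ≤ η → (ℙ ((Ev η)ᶜ)).toReal ≤ (K η : ℝ) * B η := by
    intro η hη
    have hη0 : (0:ℝ) < η := by linarith
    have hη1 : (1:ℝ) < η := by linarith
    have hlogη : 0 < Real.log η := Real.log_pos hη1
    set A : ℕ → Set Ω := fun k =>
      {ω | tt η ≤ ∑ i : (Fin NR × Fin NT) × Bool, (g (k, i) ω)^2} with hA_def
    have hsub : (Ev η)ᶜ ⊆ ⋃ k ∈ Finset.range (K η), A k := by
      intro ω hω
      rw [hEv_def] at hω
      simp only [Set.mem_compl_iff, Set.mem_setOf_eq, not_forall] at hω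
      obtain ⟨k, hk, hcond⟩ := hω
      refine Set.mem_biUnion (Finset.mem_range.mpr hk) ?_
      by_contra hnot
      apply hcond
      rw [hA_def] at hnot
      simp only [Set.mem_setOf_eq, not_le] at hnot
      rw [htr k ω]
      have hS0 : 0 ≤ ∑ i : (Fin NR × Fin NT) × Bool, (g (k, i) ω)^2 := by positivity
      have htteq : tt η = (α+1) * Real.log η - 1/η := by rw [htt_def]
      revert hS0 hnot
      generalize (∑ i : (Fin NR × Fin NT) × Bool, (g (k, i) ω)^2) = SS
      intro hnot hS0
      rw [htteq] at hnot
      have h1 : (0:ℝ) < 1 + η * SS := by nlinarith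
      have h4 : η * (1/η) = 1 := mul_one_div_cancel hη0.ne'
      have h2 : 1 + η * SS ≤ η * Real.log η * (α+1) := by nlinarith
      have hpos : 0 < η * Real.log η * (α+1) := by positivity
      calc Real.logb 2 (1 + η * SS) ≤ Real.logb 2 (η * Real.log η * (α+1)) :=
          (Real.logb_le_logb (by norm_num) h1 hpos).mpr h2
        _ = Real.logb 2 η + Real.logb 2 (Real.log η) + Real.logb 2 (α + 1) := by
            rw [Real.logb_mul (by positivity) hα1.ne',
              Real.logb_mul hη0.ne' hlogη.ne']
    have hc1 : ℙ ((Ev η)ᶜ) ≤ ∑ k ∈ Finset.range (K η), ℙ (A k) :=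
      (measure_mono hsub).trans (measure_biUnion_finset_le _ _)
    have hfin : (∑ k ∈ Finset.range (K η), ℙ (A k)) ≠ ⊤ :=
      (ENNReal.sum_lt_top.mpr fun _ _ => measure_lt_top _ _).ne
    have hc2 : (ℙ ((Ev η)ᶜ)).toReal ≤ ∑ k ∈ Finset.range (K η), (ℙ (A k)).toReal := by
      have := ENNReal.toReal_mono hfin hc1
      rwa [ENNReal.toReal_sum (fun _ _ => (measure_lt_top _ _).ne)] at this
    have hAk : ∀ k, (ℙ (A k)).toReal ≤ B η := by
      intro k
      have hsetae : A k =ᵐ[ℙ] {ω | tt η ≤ T k ω} := by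
        have hall : ∀ᵐ ω ∂ℙ, ∀ i : (Fin NR × Fin NT) × Bool, g (k, i) ω = g' (k, i) ω :=
          ae_all_iff.2 fun i => hgg' (k, i)
        rw [eventuallyEq_set]
        filter_upwards [hall] with ω hω
        have hTω : T k ω = ∑ i : (Fin NR × Fin NT) × Bool, (g (k, i) ω)^2 := by
          simp only [hTdef, Finset.sum_apply, Finset.sum_map, hXdef, he_def,
            Function.Embedding.coeFn_mk, Function.comp_apply]
          exact Finset.sum_congr rfl fun i _ => by rw [hω i]; rfl
        rw [hA_def]
        simp only [Set.mem_setOf_eq, hTω]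
      calc (ℙ (A k)).toReal = (ℙ {ω | tt η ≤ T k ω}).toReal := by rw [measure_congr hsetae]
        _ ≤ Real.exp (-s * tt η) * M ^ cι := hChern k (tt η)
        _ = B η := by rw [hB_def]
    calc (ℙ ((Ev η)ᶜ)).toReal ≤ ∑ k ∈ Finset.range (K η), (ℙ (A k)).toReal := hc2
      _ ≤ ∑ _k ∈ Finset.range (K η), B η := Finset.sum_le_sum fun k _ => hAk k
      _ = (K η : ℝ) * B η := by rw [Finset.sum_const, Finset.card_range, nsmul_eq_mul]
  have hlow : ∀ η : ℝ, 2 ≤ η → 1 - (K η : ℝ) * B η ≤ (ℙ (Ev η)).toReal := by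
    intro η hη
    have h1 : (1:ℝ) ≤ (ℙ (Ev η)).toReal + (ℙ ((Ev η)ᶜ)).toReal := by
      have h := measure_union_le (μ := ℙ) (Ev η) ((Ev η)ᶜ)
      rw [Set.union_compl_self, measure_univ] at h
      have h2 := ENNReal.toReal_mono
        (ENNReal.add_ne_top.2 ⟨measure_ne_top _ _, measure_ne_top _ _⟩) h
      rwa [ENNReal.toReal_one, ENNReal.toReal_add (measure_ne_top _ _) (measure_ne_top _ _)] at h2
    have := hmain η hη
    linarith
  have hup : ∀ η : ℝ, (ℙ (Ev η)).toReal ≤ 1 := by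
    intro η
    have h : ℙ (Ev η) ≤ 1 := prob_le_one
    calc (ℙ (Ev η)).toReal ≤ (1:ENNReal).toReal := ENNReal.toReal_mono ENNReal.one_ne_top h
      _ = 1 := ENNReal.toReal_one
  -- K * B → 0
  have hKB : Tendsto (fun η => (K η : ℝ) * B η) atTop (nhds 0) := by
    set C : ℝ := a₂ * (M ^ cι * Real.exp s) with hC_def
    have hG : Tendsto (fun η : ℝ => C * η ^ (-(1/2) : ℝ)) atTop (nhds 0) := by
      have := (tendsto_rpow_neg_atTop (by norm_num : (0:ℝ) < 1/2)).const_mul C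
      simpa using this
    refine squeeze_zero' ?_ ?_ hG
    · filter_upwards [eventually_ge_atTop (max η₁ 1)] with η _
      exact mul_nonneg (Nat.cast_nonneg _) (hB0 η)
    · filter_upwards [eventually_ge_atTop (max η₁ 1)] with η hη
      have hηη₁ : η₁ ≤ η := le_trans (le_max_left _ _) hη
      have hη1 : (1:ℝ) ≤ η := le_trans (le_max_right _ _) hη
      have hη0 : (0:ℝ) < η := by linarith
      have hKle : (K η : ℝ) ≤ a₂ * η ^ α := (hK η hηη₁).2
      have ha₂ : 0 ≤ a₂ := by
        have h2 : (0:ℝ) ≤ a₂ * η ^ α := le_trans (Nat.cast_nonneg _) hKle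
        have h3 : 0 < η ^ α := Real.rpow_pos_of_pos hη0 α
        nlinarith
      have hexp : Real.exp (-s * tt η) = Real.exp (s/η) * η ^ (-(s*(α+1))) := by
        rw [Real.rpow_def_of_pos hη0, ← Real.exp_add]
        congr 1
        rw [htt_def]
        ring
      have hMc : (0:ℝ) ≤ M ^ cι := by positivity
      have hrp : (0:ℝ) ≤ η ^ (-(s*(α+1))) := Real.rpow_nonneg hη0.le _
      have step1 : (K η : ℝ) * B η
          ≤ (a₂ * η ^ α) * (Real.exp (s/η) * η ^ (-(s*(α+1)))) * M ^ cι := by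
        rw [hB_def]
        simp only []
        rw [hexp]
        have hnn : 0 ≤ Real.exp (s/η) * η ^ (-(s*(α+1))) * M ^ cι := by positivity
        calc (K η : ℝ) * (Real.exp (s/η) * η ^ (-(s*(α+1))) * M ^ cι)
            ≤ (a₂ * η ^ α) * (Real.exp (s/η) * η ^ (-(s*(α+1))) * M ^ cι) :=
              mul_le_mul_of_nonneg_right hKle hnn
          _ = _ := by ring
      have hexps : Real.exp (s/η) ≤ Real.exp s :=
        Real.exp_le_exp.mpr (div_le_self hs0 hη1)
      have hcomb : η ^ α * η ^ (-(s*(α+1))) = η ^ (-(1/2) : ℝ) := by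
        rw [← Real.rpow_add hη0]
        congr 1
        have hs' : s * (α+1) = α + 1/2 := by
          rw [hs_def]; field_simp; ring
        linarith
      have step2 : (a₂ * η ^ α) * (Real.exp (s/η) * η ^ (-(s*(α+1)))) * M ^ cι
          ≤ C * η ^ (-(1/2) : ℝ) := by
        have h5 : (a₂ * η ^ α) * (Real.exp (s/η) * η ^ (-(s*(α+1)))) * M ^ cι
            ≤ (a₂ * η ^ α) * (Real.exp s * η ^ (-(s*(α+1)))) * M ^ cι := by
          apply mul_le_mul_of_nonneg_right _ hMc
          apply mul_le_mul_of_nonneg_left _ (by positivity)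
          exact mul_le_mul_of_nonneg_right hexps hrp
        refine h5.trans (le_of_eq ?_)
        rw [hC_def, show (a₂ * η ^ α) * (Real.exp s * η ^ (-(s*(α+1)))) * M ^ cι
          = a₂ * (M ^ cι * Real.exp s) * (η ^ α * η ^ (-(s*(α+1)))) from by ring, hcomb]
      exact step1.trans step2
  -- conclude by squeezing
  have hlim1 : Tendsto (fun η => 1 - (K η : ℝ) * B η) atTop (nhds 1) := by
    have := (tendsto_const_nhds : Tendsto (fun _ : ℝ => (1:ℝ)) atTop (nhds 1)).sub hKB
    simpa using this
  refine tendsto_of_tendsto_of_tendsto_of_le_of_le' hlim1 tendsto_const_nhds ?_ ?_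
  · filter_upwards [eventually_ge_atTop (2:ℝ)] with η hη
    exact hlow η hη
  · exact Eventually.of_forall hup
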